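/- Under compound symmetry with common variance S² and common correlation ρ, for every nonempty subset A ⊆ {1,…,K} the population variance of the unit-level factorial effects equals S_A² = (1/2^{K−2}) (1−ρ) S². -/

import Mathlib

open Finset

noncomputable section

/-- A treatment combination in a 2^K factorial design: each of the K factors
is at its low level (`false`, coded −1) or high level (`true`, coded +1). -/
abbrev Combo (K : ℕ) := Fin K → Bool

/-- The completely randomized assignments: each of the 2^K treatment
combinations receives exactly `r` of the `N` units. -/
def Assignments (K N r : ℕ) : Finset (Fin N → Combo K) :=
  Finset.univ.filter (fun ω => ∀ z : Combo K, (Finset.univ.filter (fun i => ω i = z)).card = r)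

/-- Expectation over the uniform distribution on completely randomized assignments. -/
def expect (K N r : ℕ) (f : (Fin N → Combo K) → ℝ) : ℝ :=
  (∑ ω ∈ Assignments K N r, f ω) / ((Assignments K N r).card : ℝ)

/-- Variance over the uniform distribution on completely randomized assignments. -/
def variance (K N r : ℕ) (f : (Fin N → Combo K) → ℝ) : ℝ :=
  expect K N r (fun ω => (f ω - expect K N r f) ^ 2)

/-- Covariance over the uniform distribution on completely randomized assignments. -/
def covariance (K N r : ℕ) (f g : (Fin N → Combo K) → ℝ) : ℝ :=
  expect K N r (fun ω => (f ω - expect K N r f) * (g ω - expect K N r g))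

/-- The assignment indicator W_i(z). -/
def Wvar (K N : ℕ) (ω : Fin N → Combo K) (i : Fin N) (z : Combo K) : ℝ :=
  if ω i = z then 1 else 0

/-- The population mean Ȳ(z) of the potential outcomes under z. -/
def Ybar (K N : ℕ) (Y : Fin N → Combo K → ℝ) (z : Combo K) : ℝ :=
  (∑ i, Y i z) / (N : ℝ)

/-- The observed treatment mean Ȳ^obs(z) = (1/r) Σ_{i : W_i(z)=1} Y_i(z). -/
def YbarObs (K N r : ℕ) (Y : Fin N → Combo K → ℝ)
    (ω : Fin N → Combo K) (z : Combo K) : ℝ :=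
  (∑ i, if ω i = z then Y i z else 0) / (r : ℝ)

/-- Finite-population variance S²(z) (divisor N−1). -/
def Ssq (K N : ℕ) (Y : Fin N → Combo K → ℝ) (z : Combo K) : ℝ :=
  (∑ i, (Y i z - Ybar K N Y z) ^ 2) / ((N : ℝ) - 1)

/-- Finite-population covariance S²(z, z*) (divisor N−1). -/
def Scov (K N : ℕ) (Y : Fin N → Combo K → ℝ) (z zs : Combo K) : ℝ :=
  (∑ i, (Y i z - Ybar K N Y z) * (Y i zs - Ybar K N Y zs)) / ((N : ℝ) - 1)

/-- The contrast g_A(z) = Π_{k ∈ A} z_k ∈ {−1, +1}. -/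
def gA (K : ℕ) (A : Finset (Fin K)) (z : Combo K) : ℝ :=
  ∏ k ∈ A, (if z k then (1 : ℝ) else -1)

/-- The unit-level factorial effect τ_{iA} = 2^{−(K−1)} Σ_z g_A(z) Y_i(z). -/
def tauUnit (K N : ℕ) (Y : Fin N → Combo K → ℝ) (A : Finset (Fin K)) (i : Fin N) : ℝ :=
  (∑ z : Combo K, gA K A z * Y i z) / (2 : ℝ) ^ (K - 1)

/-- The population-level factorial effect τ̄_A = (1/N) Σ_i τ_{iA}. -/
def tauBar (K N : ℕ) (Y : Fin N → Combo K → ℝ) (A : Finset (Fin K)) : ℝ :=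
  (∑ i, tauUnit K N Y A i) / (N : ℝ)

/-- The estimated factorial effect τ̂_A = 2^{−(K−1)} Σ_z g_A(z) Ȳ^obs(z). -/
def tauHat (K N r : ℕ) (Y : Fin N → Combo K → ℝ) (A : Finset (Fin K))
    (ω : Fin N → Combo K) : ℝ :=
  (∑ z : Combo K, gA K A z * YbarObs K N r Y ω z) / (2 : ℝ) ^ (K - 1)

/-- The finite-population variance S_A² of the unit-level factorial effects. -/
def SsqA (K N : ℕ) (Y : Fin N → Combo K → ℝ) (A : Finset (Fin K)) : ℝ :=
  (∑ i, (tauUnit K N Y A i - tauBar K N Y A) ^ 2) / ((N : ℝ) - 1)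

/-- Strict additivity: unit-level differences of potential outcomes between any
two treatment combinations are constant across units. -/
def StrictAdditivity (K N : ℕ) (Y : Fin N → Combo K → ℝ) : Prop :=
  ∀ z zs : Combo K, ∀ i i' : Fin N, Y i z - Y i zs = Y i' z - Y i' zs

/-- Compound symmetry: common variance S² > 0 and common correlation ρ,
i.e. S²(z) = S² for all z and S²(z,z*) = ρ S² for all z ≠ z*. -/
def CompoundSymmetry (K N : ℕ) (Y : Fin N → Combo K → ℝ) (S2 ρ : ℝ) : Prop :=
  0 < S2 ∧ (∀ z : Combo K, Ssq K N Y z = S2) ∧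
    ∀ z zs : Combo K, z ≠ zs → Scov K N Y z zs = ρ * S2


lemma gA_sq (K : ℕ) (A : Finset (Fin K)) (z : Combo K) : gA K A z * gA K A z = 1 := by
  unfold gA
  rw [← Finset.prod_mul_distrib]
  apply Finset.prod_eq_one
  intro k _
  by_cases h : z k <;> simp [h]

lemma sum_gA_eq_zero (K : ℕ) (A : Finset (Fin K)) (hA : A.Nonempty) :
    ∑ z : Combo K, gA K A z = 0 := by
  obtain ⟨a, ha⟩ := hA
  have hinv : Function.Involutive (fun z : Combo K => Function.update z a (!z a)) := by
    intro z
    funext k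
    by_cases h : k = a <;> simp [Function.update, h]
  have he : ∀ z : Combo K, gA K A (Function.update z a (!z a)) = -gA K A z := by
    intro z
    unfold gA
    rw [← Finset.mul_prod_erase A _ ha, ← Finset.mul_prod_erase A _ ha]
    have h1 : ∀ k ∈ A.erase a,
        (if Function.update z a (!z a) k then (1:ℝ) else -1) = (if z k then 1 else -1) := by
      intro k hk
      rw [Function.update_of_ne (Finset.ne_of_mem_erase hk)]
    rw [Finset.prod_congr rfl h1, Function.update_self]
    cases h : z a <;> simp
  have hec := Equiv.sum_comp (hinv.toPerm _) (gA K A)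
  simp only [Function.Involutive.coe_toPerm] at hec
  have h2 : ∑ z : Combo K, gA K A z = -∑ z : Combo K, gA K A z := by
    conv_lhs => rw [← hec]
    rw [← Finset.sum_neg_distrib]
    exact Finset.sum_congr rfl fun z _ => he z
  linarith

/-- Under compound symmetry, S_A² = (1/2^{K−2}) (1−ρ) S². -/
theorem SsqA_compound_symmetry (K N r : ℕ) (hK : 1 ≤ K) (hr : 0 < r)
    (hN : N = r * 2 ^ K) (hN2 : 2 ≤ N) (Y : Fin N → Combo K → ℝ) (S2 ρ : ℝ)
    (hcs : CompoundSymmetry K N Y S2 ρ)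
    (A : Finset (Fin K)) (hA : A.Nonempty) :
    SsqA K N Y A = (1 / (2 : ℝ) ^ ((K : ℤ) - 2)) * (1 - ρ) * S2 := by
  obtain ⟨hS2, hvar, hcov⟩ := hcs
  have hN1 : (N : ℝ) - 1 ≠ 0 := by
    have : (2 : ℝ) ≤ (N : ℝ) := by exact_mod_cast hN2
    linarith
  set c : ℝ := (2 : ℝ) ^ (K - 1) with hc
  have hc0 : c ≠ 0 := by positivity
  have hdiag : ∀ z : Combo K, Scov K N Y z z = Ssq K N Y z := by
    intro z
    unfold Scov Ssq
    congr 1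
    exact Finset.sum_congr rfl fun i _ => (sq _).symm
  have hScov : ∀ z zs : Combo K, Scov K N Y z zs
      = ρ * S2 + (if z = zs then (1 - ρ) * S2 else 0) := by
    intro z zs
    by_cases h : z = zs
    · subst h
      rw [hdiag z, hvar z, if_pos rfl]
      ring
    · rw [hcov z zs h, if_neg h, add_zero]
  have htb : tauBar K N Y A = (∑ z : Combo K, gA K A z * Ybar K N Y z) / c := by
    unfold tauBar tauUnit Ybar
    rw [← Finset.sum_div]
    have hs : ∑ i, ∑ z : Combo K, gA K A z * Y i z
        = ∑ z : Combo K, gA K A z * ∑ i, Y i z := by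
      rw [Finset.sum_comm]
      exact Finset.sum_congr rfl fun z _ => (Finset.mul_sum _ _ _).symm
    rw [hs]
    simp only [mul_div_assoc']
    rw [← Finset.sum_div, div_div, div_div, mul_comm]
  have hD : ∀ i, tauUnit K N Y A i - tauBar K N Y A
      = (∑ z : Combo K, gA K A z * (Y i z - Ybar K N Y z)) / c := by
    intro i
    rw [htb]
    unfold tauUnit
    rw [div_sub_div_same, ← Finset.sum_sub_distrib]
    congr 1
    exact Finset.sum_congr rfl fun z _ => (mul_sub _ _ _).symm
  have hScovsum : ∀ z zs : Combo K,
      ∑ i, (Y i z - Ybar K N Y z) * (Y i zs - Ybar K N Y zs)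
        = ((N : ℝ) - 1) * Scov K N Y z zs := by
    intro z zs
    unfold Scov
    field_simp
  have h2K : ((Finset.univ : Finset (Combo K)).card : ℝ) = 2 ^ K := by
    simp [Fintype.card_fun]
  have hsum : ∑ i, (tauUnit K N Y A i - tauBar K N Y A) ^ 2
      = (((N : ℝ) - 1) * ((1 - ρ) * S2) * 2 ^ K) / c ^ 2 := by
    calc ∑ i, (tauUnit K N Y A i - tauBar K N Y A) ^ 2
        = (∑ i, (∑ z : Combo K, gA K A z * (Y i z - Ybar K N Y z)) ^ 2) / c ^ 2 := by
          rw [Finset.sum_div]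
          exact Finset.sum_congr rfl fun i _ => by rw [hD i, div_pow]
      _ = (∑ z : Combo K, ∑ zs : Combo K, gA K A z * gA K A zs
            * (((N : ℝ) - 1) * Scov K N Y z zs)) / c ^ 2 := by
          congr 1
          have hsq : ∀ i : Fin N, (∑ z : Combo K, gA K A z * (Y i z - Ybar K N Y z)) ^ 2
              = ∑ z : Combo K, ∑ zs : Combo K,
                  (gA K A z * gA K A zs) * ((Y i z - Ybar K N Y z) * (Y i zs - Ybar K N Y zs)) := by
            intro i
            rw [sq, Finset.sum_mul_sum]
            exact Finset.sum_congr rfl fun z _ => Finset.sum_congr rfl fun zs _ => by ring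
          simp only [hsq]
          rw [Finset.sum_comm]
          refine Finset.sum_congr rfl fun z _ => ?_
          rw [Finset.sum_comm]
          refine Finset.sum_congr rfl fun zs _ => ?_
          rw [← Finset.mul_sum, hScovsum z zs]
      _ = (((N : ℝ) - 1) * ((1 - ρ) * S2) * 2 ^ K) / c ^ 2 := by
          congr 1
          simp only [hScov, mul_add, Finset.sum_add_distrib]
          have hz1 : ∑ zs : Combo K, gA K A zs * (((N : ℝ) - 1) * (ρ * S2)) = 0 := by
            rw [← Finset.sum_mul, sum_gA_eq_zero K A hA, zero_mul]
          have h1 : ∑ z : Combo K, ∑ zs : Combo K,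
              gA K A z * gA K A zs * (((N : ℝ) - 1) * (ρ * S2)) = 0 := by
            simp only [mul_assoc]
            rw [← Finset.sum_mul_sum, sum_gA_eq_zero K A hA, zero_mul]
          rw [h1, zero_add]
          have h2 : ∀ z : Combo K, ∑ zs : Combo K,
              gA K A z * gA K A zs * (((N : ℝ) - 1) * (if z = zs then (1 - ρ) * S2 else 0))
              = ((N : ℝ) - 1) * ((1 - ρ) * S2) := by
            intro z
            rw [Finset.sum_eq_single z]
            · rw [if_pos rfl, gA_sq, one_mul]
            · intro zs _ hzs
              rw [if_neg (Ne.symm hzs), mul_zero, mul_zero]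
            · intro h; exact absurd (Finset.mem_univ z) h
          simp only [h2, Finset.sum_const, nsmul_eq_mul]
          rw [h2K]; ring
  have hpow : c ^ 2 * (1 / (2 : ℝ) ^ ((K : ℤ) - 2)) = 2 ^ K := by
    rw [hc, ← pow_mul, one_div, ← zpow_neg, neg_sub, ← zpow_natCast ((2:ℝ)) ((K-1) * 2),
      ← zpow_add₀ (two_ne_zero), ← zpow_natCast ((2:ℝ)) K]
    congr 1
    push_cast [Nat.cast_sub hK]
    ring
  unfold SsqA
  rw [hsum, ← hpow]
  field_simp
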